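/- Suppose I is of linear type, i.e. L_n = V_1·L_{n-1} for all n ≥ 2. Then for every n ≥ 2 one has: L̄_n = V̄_1·L̄_{n-1} if and only if I^n ∩ J = I·(I^{n-1} ∩ J). In other words, E(I;A/J)_n = 0 exactly when the n-th Artin-Rees module E(J,A;I)_n = (I^n ∩ J)/I·(I^{n-1} ∩ J) vanishes; consequently s(J,A;I) = rt(I;A/J) and m(J,A;I) = st(I;A/J). -/

import Mathlib

/-- The `A`-submodule of homogeneous elements of degree `n` in the kernel `L` of the
presentation `φ : A[X_1,…,X_r] → A[t]`, `X_i ↦ x_i t`, of the Rees algebra of the ideal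
`I = (x_1,…,x_r)`; i.e. the degree-`n` equations `L_n` of the Rees algebra. -/
noncomputable def reesRel {A : Type*} [CommRing A] {r : ℕ} (x : Fin r → A) (n : ℕ) :
    Submodule A (MvPolynomial (Fin r) A) :=
  (RingHom.ker (MvPolynomial.aeval (fun i => Polynomial.C (x i) * Polynomial.X) :
      MvPolynomial (Fin r) A →ₐ[A] Polynomial A)).restrictScalars A
  ⊓ MvPolynomial.homogeneousSubmodule (Fin r) A n

/-- `E(I)_n = 0`, i.e. `L_n = V_1·L_{n-1}`: the degree-`n` equations of the Rees algebra
are generated by those of degree `n-1`. -/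
def reesRelStable {A : Type*} [CommRing A] {r : ℕ} (x : Fin r → A) (n : ℕ) : Prop :=
  reesRel x n = MvPolynomial.homogeneousSubmodule (Fin r) A 1 * reesRel x (n - 1)

/-- The set `SD(I) = {1} ∪ {n ≥ 2 : L_n ≠ V_1·L_{n-1}}` of sifted degrees. -/
def siftedDegrees {A : Type*} [CommRing A] {r : ℕ} (x : Fin r → A) : Set ℕ :=
  {1} ∪ {n : ℕ | 2 ≤ n ∧ ¬ reesRelStable x n}

/-- The sifted type `st(I) = card SD(I)`. -/
noncomputable def siftedType {A : Type*} [CommRing A] {r : ℕ} (x : Fin r → A) : ℕ :=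
  (siftedDegrees x).ncard

/-- The relation type `rt(I)`: the least `s ≥ 1` with `L_n = V_1·L_{n-1}` for all
`n ≥ s+1`. -/
noncomputable def relType {A : Type*} [CommRing A] {r : ℕ} (x : Fin r → A) : ℕ :=
  sInf {s : ℕ | 1 ≤ s ∧ ∀ n, s + 1 ≤ n → reesRelStable x n}

/-- The strong Artin-Rees number `s(J,A;I)`: the least `s ≥ 1` with
`I^n ∩ J = I·(I^{n-1} ∩ J)` for all `n ≥ s+1`. -/
noncomputable def strongAR {A : Type*} [CommRing A] (I J : Ideal A) : ℕ :=
  sInf {s : ℕ | 1 ≤ s ∧ ∀ n, s + 1 ≤ n → I ^ n ⊓ J = I * (I ^ (n - 1) ⊓ J)}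

/-- The medium Artin-Rees number `m(J,A;I) = 1 + card{n ≥ 2 : E(J,A;I)_n ≠ 0}`. -/
noncomputable def mediumAR {A : Type*} [CommRing A] (I J : Ideal A) : ℕ :=
  1 + {n : ℕ | 2 ≤ n ∧ I ^ n ⊓ J ≠ I * (I ^ (n - 1) ⊓ J)}.ncard

/-- The weak Artin-Rees number `w(J,A;I)`: the least `s ≥ 1` with
`I^n ∩ J ⊆ I^{n-s}·J` for all `n ≥ s`. -/
noncomputable def weakAR {A : Type*} [CommRing A] (I J : Ideal A) : ℕ :=
  sInf {s : ℕ | 1 ≤ s ∧ ∀ n, s ≤ n → I ^ n ⊓ J ≤ I ^ (n - s) * J}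

section Helpers

open MvPolynomial

variable {A : Type*} [CommRing A] {r : ℕ}

private lemma degree_of_mem_support {B : Type*} [CommRing B] {f : MvPolynomial (Fin r) B}
    {n : ℕ} {d : Fin r →₀ ℕ} (hf : f.IsHomogeneous n) (hd : MvPolynomial.coeff d f ≠ 0) :
    d.degree = n := by
  have := hf hd
  rwa [Finsupp.degree_eq_weight_one]

private lemma degree_sum_eq {B : Type*} [CommRing B] {f : MvPolynomial (Fin r) B}
    {n : ℕ} {d : Fin r →₀ ℕ} (hf : f.IsHomogeneous n) (hd : MvPolynomial.coeff d f ≠ 0) :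
    ∑ i ∈ d.support, d i = n :=
  degree_of_mem_support hf hd

private lemma aeval_homog_eq {B : Type*} [CommRing B] (y : Fin r → B) {n : ℕ}
    {f : MvPolynomial (Fin r) B} (hf : f.IsHomogeneous n) :
    (MvPolynomial.aeval (fun i => Polynomial.C (y i) * Polynomial.X) :
        MvPolynomial (Fin r) B →ₐ[B] Polynomial B) f
      = Polynomial.C (MvPolynomial.aeval y f) * Polynomial.X ^ n := by
  conv_lhs => rw [f.as_sum]
  conv_rhs => rw [f.as_sum]
  rw [map_sum, map_sum, map_sum, Finset.sum_mul]
  refine Finset.sum_congr rfl fun d hd => ?_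
  have hdeg : ∑ i ∈ d.support, d i = n :=
    degree_sum_eq hf (MvPolynomial.mem_support_iff.mp hd)
  rw [aeval_monomial, aeval_monomial]
  simp only [Algebra.algebraMap_self, RingHom.id_apply, Finsupp.prod, mul_pow, ← Polynomial.C_pow,
    Finset.prod_mul_distrib, ← map_prod, Finset.prod_pow_eq_pow_sum, hdeg, map_mul,
    Polynomial.algebraMap_eq]
  ring

private lemma mem_reesRel {B : Type*} [CommRing B] (y : Fin r → B) (n : ℕ)
    (f : MvPolynomial (Fin r) B) :
    f ∈ reesRel y n ↔ f.IsHomogeneous n ∧ MvPolynomial.aeval y f = 0 := by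
  rw [reesRel, Submodule.mem_inf, Submodule.restrictScalars_mem, RingHom.mem_ker,
    mem_homogeneousSubmodule, and_comm]
  refine and_congr_right fun hf => ?_
  rw [aeval_homog_eq y hf]
  constructor
  · intro h
    have h2 := congrArg (fun p => Polynomial.coeff p n) h
    simp only [Polynomial.coeff_C_mul, Polynomial.coeff_X_pow, if_pos rfl, mul_one,
      Polynomial.coeff_zero] at h2
    simpa using h2
  · intro h; rw [h, map_zero, zero_mul]

private lemma prod_pow_mem {B : Type*} [CommRing B] (y : Fin r → B) {d : Fin r →₀ ℕ} {n : ℕ}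
    (hd : ∑ i ∈ d.support, d i = n) :
    (∏ i ∈ d.support, y i ^ d i) ∈ (Ideal.span (Set.range y)) ^ n := by
  have : (Ideal.span (Set.range y)) ^ n = ∏ i ∈ d.support, (Ideal.span (Set.range y)) ^ d i := by
    rw [Finset.prod_pow_eq_pow_sum, hd]
  rw [this]
  refine Ideal.prod_mem_prod fun i _ => ?_
  have h1 : y i ∈ Ideal.span (Set.range y) := Ideal.subset_span ⟨i, rfl⟩
  exact Ideal.pow_mem_pow h1 _

private lemma aeval_mem_pow {B : Type*} [CommRing B] (y : Fin r → B) {n : ℕ}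
    {f : MvPolynomial (Fin r) B} (hf : f.IsHomogeneous n) :
    MvPolynomial.aeval y f ∈ (Ideal.span (Set.range y)) ^ n := by
  rw [f.as_sum, map_sum]
  refine Submodule.sum_mem _ fun d hd => ?_
  rw [aeval_monomial]
  exact Ideal.mul_mem_left _ _
    (prod_pow_mem y (degree_sum_eq hf (MvPolynomial.mem_support_iff.mp hd)))

private lemma exists_homog_one {B : Type*} [CommRing B] (y : Fin r → B) {b : B}
    (hb : b ∈ Ideal.span (Set.range y)) :
    ∃ g : MvPolynomial (Fin r) B, g.IsHomogeneous 1 ∧ MvPolynomial.aeval y g = b := by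
  refine Submodule.span_induction
    (p := fun b _ => ∃ g : MvPolynomial (Fin r) B, g.IsHomogeneous 1 ∧ MvPolynomial.aeval y g = b)
    ?_ ?_ ?_ ?_ hb
  · rintro _ ⟨i, rfl⟩
    exact ⟨X i, isHomogeneous_X _ _, by simp⟩
  · exact ⟨0, (homogeneousSubmodule (Fin r) B 1).zero_mem, by simp⟩
  · rintro u v _ _ ⟨g₁, hg₁, rfl⟩ ⟨g₂, hg₂, rfl⟩
    exact ⟨g₁ + g₂, hg₁.add hg₂, by simp⟩
  · rintro c u _ ⟨g, hg, rfl⟩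
    exact ⟨c • g, (homogeneousSubmodule (Fin r) B 1).smul_mem c hg, by simp⟩

private lemma exists_homog_aeval {B : Type*} [CommRing B] (y : Fin r → B) :
    ∀ n : ℕ, ∀ a ∈ (Ideal.span (Set.range y)) ^ n,
      ∃ f : MvPolynomial (Fin r) B, f.IsHomogeneous n ∧ MvPolynomial.aeval y f = a := by
  intro n
  induction n with
  | zero =>
    intro a _
    exact ⟨C a, isHomogeneous_C _ _, by simp⟩
  | succ m ih =>
    intro a ha
    rw [pow_succ] at ha
    refine Submodule.mul_induction_on ha ?_ ?_
    · intro b hb c hc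
      obtain ⟨f, hf, rfl⟩ := ih b hb
      obtain ⟨g, hg, rfl⟩ := exists_homog_one y hc
      exact ⟨f * g, hf.mul hg, by simp⟩
    · rintro u v ⟨f, hf, rfl⟩ ⟨g, hg, rfl⟩
      exact ⟨f + g, hf.add hg, by simp⟩

private lemma isHomog_map {B C : Type*} [CommRing B] [CommRing C] (φ : B →+* C)
    {f : MvPolynomial (Fin r) B} {n : ℕ} (hf : f.IsHomogeneous n) :
    (MvPolynomial.map φ f).IsHomogeneous n := by
  intro d hd
  rw [MvPolynomial.coeff_map] at hd
  exact hf fun h => hd (by rw [h, map_zero])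

private lemma exists_homog_map_eq (J : Ideal A) {n : ℕ} (g : MvPolynomial (Fin r) (A ⧸ J))
    (hg : g.IsHomogeneous n) :
    ∃ f : MvPolynomial (Fin r) A, f.IsHomogeneous n ∧
      MvPolynomial.map (Ideal.Quotient.mk J) f = g := by
  choose c hc using fun d => Ideal.Quotient.mk_surjective (I := J) (g.coeff d)
  refine ⟨∑ d ∈ g.support, monomial d (c d), ?_, ?_⟩
  · refine IsHomogeneous.sum _ _ _ fun d hd => isHomogeneous_monomial _ ?_
    exact degree_of_mem_support hg (MvPolynomial.mem_support_iff.mp hd)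
  · rw [map_sum]
    simp only [MvPolynomial.map_monomial, hc]
    exact g.support_sum_monomial_coeff

private lemma aeval_map_mk (x : Fin r → A) (J : Ideal A) (f : MvPolynomial (Fin r) A) :
    MvPolynomial.aeval (fun i => Ideal.Quotient.mk J (x i))
        (MvPolynomial.map (Ideal.Quotient.mk J) f)
      = Ideal.Quotient.mk J (MvPolynomial.aeval x f) := by
  induction f using MvPolynomial.induction_on with
  | C a => simp [MvPolynomial.aeval_C, Ideal.Quotient.algebraMap_eq]
  | add p q hp hq => simp only [map_add, hp, hq]
  | mul_X p i hp => simp only [map_mul, hp, MvPolynomial.map_X, MvPolynomial.aeval_X]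

private lemma aeval_mem_of_map_eq_zero (x : Fin r → A) (J : Ideal A) {n : ℕ}
    {f : MvPolynomial (Fin r) A} (hf : f.IsHomogeneous n)
    (h0 : MvPolynomial.map (Ideal.Quotient.mk J) f = 0) :
    MvPolynomial.aeval x f ∈ J * (Ideal.span (Set.range x)) ^ n := by
  rw [f.as_sum, map_sum]
  refine Submodule.sum_mem _ fun d hd => ?_
  rw [aeval_monomial, Algebra.algebraMap_self, RingHom.id_apply]
  refine Ideal.mul_mem_mul ?_ ?_
  · have := congrArg (MvPolynomial.coeff d) h0
    rw [MvPolynomial.coeff_map, MvPolynomial.coeff_zero] at this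
    exact Ideal.Quotient.eq_zero_iff_mem.mp this
  · exact prod_pow_mem x (degree_sum_eq hf (MvPolynomial.mem_support_iff.mp hd))

private lemma homog_mul_succ {B : Type*} [CommRing B] {p q : MvPolynomial (Fin r) B} {m : ℕ}
    (hp : p.IsHomogeneous 1) (hq : q.IsHomogeneous m) : (p * q).IsHomogeneous (m + 1) :=
  add_comm 1 m ▸ hp.mul hq

private lemma exists_lift_of_mem_mul (x : Fin r → A) (J : Ideal A) (m : ℕ) :
    ∀ g ∈ (MvPolynomial.homogeneousSubmodule (Fin r) (A ⧸ J) 1 *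
        reesRel (fun i => Ideal.Quotient.mk J (x i)) m :
        Submodule (A ⧸ J) (MvPolynomial (Fin r) (A ⧸ J))),
      ∃ h : MvPolynomial (Fin r) A, h.IsHomogeneous (m + 1) ∧
        MvPolynomial.map (Ideal.Quotient.mk J) h = g ∧
        MvPolynomial.aeval x h ∈ Ideal.span (Set.range x) *
          ((Ideal.span (Set.range x)) ^ m ⊓ J) := by
  intro g hg
  refine Submodule.mul_induction_on hg ?_ ?_
  · intro p hp q hq
    rw [mem_reesRel] at hq
    obtain ⟨p', hp', hpe⟩ := exists_homog_map_eq J p hp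
    obtain ⟨q', hq', hqe⟩ := exists_homog_map_eq J q hq.1
    have hqJ : MvPolynomial.aeval x q' ∈ J := by
      rw [← Ideal.Quotient.eq_zero_iff_mem, ← aeval_map_mk, hqe]
      exact hq.2
    refine ⟨p' * q', homog_mul_succ hp' hq', by rw [map_mul, hpe, hqe], ?_⟩
    rw [map_mul]
    have hpI : MvPolynomial.aeval x p' ∈ Ideal.span (Set.range x) := by
      have := aeval_mem_pow x hp'; rwa [pow_one] at this
    exact Ideal.mul_mem_mul hpI (Submodule.mem_inf.mpr ⟨aeval_mem_pow x hq', hqJ⟩)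
  · rintro u v ⟨h₁, hh₁, he₁, hm₁⟩ ⟨h₂, hh₂, he₂, hm₂⟩
    exact ⟨h₁ + h₂, hh₁.add hh₂, by rw [map_add, he₁, he₂],
      by rw [map_add]; exact add_mem hm₁ hm₂⟩

private lemma existsE (x : Fin r → A) (J : Ideal A) (m : ℕ) :
    ∀ a ∈ Ideal.span (Set.range x) * ((Ideal.span (Set.range x)) ^ m ⊓ J),
      ∃ h : MvPolynomial (Fin r) A, h.IsHomogeneous (m + 1) ∧ MvPolynomial.aeval x h = a ∧
        MvPolynomial.map (Ideal.Quotient.mk J) h ∈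
          (MvPolynomial.homogeneousSubmodule (Fin r) (A ⧸ J) 1 *
            reesRel (fun i => Ideal.Quotient.mk J (x i)) m :
            Submodule (A ⧸ J) (MvPolynomial (Fin r) (A ⧸ J))) := by
  intro a ha
  refine Submodule.mul_induction_on ha ?_ ?_
  · intro b hb c hc
    rw [Submodule.mem_inf] at hc
    obtain ⟨p, hp, hpe⟩ := exists_homog_one x hb
    obtain ⟨q, hq, hqe⟩ := exists_homog_aeval x m c hc.1
    refine ⟨p * q, homog_mul_succ hp hq, by rw [map_mul, hpe, hqe], ?_⟩
    rw [map_mul]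
    refine Submodule.mul_mem_mul (isHomog_map _ hp)
      ((mem_reesRel _ _ _).mpr ⟨isHomog_map _ hq, ?_⟩)
    rw [aeval_map_mk, hqe]
    exact Ideal.Quotient.eq_zero_iff_mem.mpr hc.2
  · rintro u v ⟨h₁, hh₁, he₁, hm₁⟩ ⟨h₂, hh₂, he₂, hm₂⟩
    exact ⟨h₁ + h₂, hh₁.add hh₂, by rw [map_add, he₁, he₂], by rw [map_add]; exact add_mem hm₁ hm₂⟩

private lemma mapF (x : Fin r → A) (J : Ideal A) (m : ℕ) :
    ∀ u ∈ (MvPolynomial.homogeneousSubmodule (Fin r) A 1 * reesRel x m :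
        Submodule A (MvPolynomial (Fin r) A)),
      MvPolynomial.map (Ideal.Quotient.mk J) u ∈
        (MvPolynomial.homogeneousSubmodule (Fin r) (A ⧸ J) 1 *
          reesRel (fun i => Ideal.Quotient.mk J (x i)) m :
          Submodule (A ⧸ J) (MvPolynomial (Fin r) (A ⧸ J))) := by
  intro u hu
  refine Submodule.mul_induction_on hu ?_ ?_
  · intro p hp q hq
    rw [mem_reesRel] at hq
    rw [map_mul]
    refine Submodule.mul_mem_mul (isHomog_map _ hp)
      ((mem_reesRel _ _ _).mpr ⟨isHomog_map _ hq.1, ?_⟩)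
    rw [aeval_map_mk, hq.2, map_zero]
  · intro u v hu hv
    rw [map_add]; exact add_mem hu hv

private lemma forward_dir (x : Fin r → A) (J : Ideal A) (m : ℕ)
    (h : reesRel (fun i => Ideal.Quotient.mk J (x i)) (m + 1) =
      MvPolynomial.homogeneousSubmodule (Fin r) (A ⧸ J) 1 *
        reesRel (fun i => Ideal.Quotient.mk J (x i)) m) :
    (Ideal.span (Set.range x)) ^ (m + 1) ⊓ J =
      Ideal.span (Set.range x) * ((Ideal.span (Set.range x)) ^ m ⊓ J) := by
  set I := Ideal.span (Set.range x) with hI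
  refine le_antisymm ?_ ?_
  · intro a ha
    rw [Submodule.mem_inf] at ha
    obtain ⟨f, hf, hfa⟩ := exists_homog_aeval x (m + 1) a ha.1
    have hmem : MvPolynomial.map (Ideal.Quotient.mk J) f ∈
        reesRel (fun i => Ideal.Quotient.mk J (x i)) (m + 1) := by
      rw [mem_reesRel]
      refine ⟨isHomog_map _ hf, ?_⟩
      rw [aeval_map_mk, hfa]
      exact Ideal.Quotient.eq_zero_iff_mem.mpr ha.2
    rw [h] at hmem
    obtain ⟨g, hg, hge, hgm⟩ := exists_lift_of_mem_mul x J m _ hmem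
    have hsub : MvPolynomial.aeval x (f - g) ∈ J * I ^ (m + 1) := by
      refine aeval_mem_of_map_eq_zero x J
        ((MvPolynomial.homogeneousSubmodule (Fin r) A (m + 1)).sub_mem hf hg) ?_
      rw [map_sub, hge, sub_self]
    have hJle : J * I ^ (m + 1) ≤ I * (I ^ m ⊓ J) := by
      have h1 : J * I ^ (m + 1) = I * (J * I ^ m) := by ring
      rw [h1]
      exact Ideal.mul_mono_right (le_inf Ideal.mul_le_right Ideal.mul_le_left)
    have hsplit : a = MvPolynomial.aeval x g + MvPolynomial.aeval x (f - g) := by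
      rw [map_sub, hfa]; ring
    rw [hsplit]
    exact add_mem hgm (hJle hsub)
  · refine le_inf ?_ ?_
    · calc I * (I ^ m ⊓ J) ≤ I * I ^ m := Ideal.mul_mono_right inf_le_left
        _ = I ^ (m + 1) := (pow_succ' I m).symm
    · exact le_trans (Ideal.mul_mono_right inf_le_right) Ideal.mul_le_right

private lemma backward_dir (x : Fin r → A) (J : Ideal A) (m : ℕ)
    (hlin : reesRel x (m + 1) = MvPolynomial.homogeneousSubmodule (Fin r) A 1 * reesRel x m)
    (hQ : (Ideal.span (Set.range x)) ^ (m + 1) ⊓ J =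
      Ideal.span (Set.range x) * ((Ideal.span (Set.range x)) ^ m ⊓ J)) :
    reesRel (fun i => Ideal.Quotient.mk J (x i)) (m + 1) =
      MvPolynomial.homogeneousSubmodule (Fin r) (A ⧸ J) 1 *
        reesRel (fun i => Ideal.Quotient.mk J (x i)) m := by
  refine le_antisymm ?_ ?_
  · intro g hg
    rw [mem_reesRel] at hg
    obtain ⟨f, hf, hfe⟩ := exists_homog_map_eq J g hg.1
    have hfJ : MvPolynomial.aeval x f ∈ (Ideal.span (Set.range x)) ^ (m + 1) ⊓ J := by
      refine Submodule.mem_inf.mpr ⟨aeval_mem_pow x hf, ?_⟩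
      rw [← Ideal.Quotient.eq_zero_iff_mem, ← aeval_map_mk, hfe]
      exact hg.2
    rw [hQ] at hfJ
    obtain ⟨h, hh, hhe, hhm⟩ := existsE x J m _ hfJ
    have hker : f - h ∈ reesRel x (m + 1) := by
      rw [mem_reesRel]
      exact ⟨(MvPolynomial.homogeneousSubmodule (Fin r) A (m + 1)).sub_mem hf hh,
        by rw [map_sub, hhe, sub_self]⟩
    rw [hlin] at hker
    have h1 := mapF x J m _ hker
    have h2 : g = MvPolynomial.map (Ideal.Quotient.mk J) (f - h) +
        MvPolynomial.map (Ideal.Quotient.mk J) h := by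
      rw [← map_add, sub_add_cancel, hfe]
    rw [h2]
    exact add_mem h1 hhm
  · refine Submodule.mul_le.mpr fun p hp q hq => ?_
    rw [mem_reesRel] at hq ⊢
    exact ⟨homog_mul_succ hp hq.1, by rw [map_mul, hq.2, mul_zero]⟩

end Helpers

/-- If `I` is of linear type (`L_n = V_1·L_{n-1}` for all `n ≥ 2`), then for
each `n ≥ 2`: `L̄_n = V̄_1·L̄_{n-1}` iff `I^n ∩ J = I·(I^{n-1} ∩ J)`; consequently
`s(J,A;I) = rt(I;A/J)` and `m(J,A;I) = st(I;A/J)`. -/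
theorem stmt_7 {A : Type*} [CommRing A] [IsNoetherianRing A] {r : ℕ}
    (x : Fin r → A) (J : Ideal A) (hlin : ∀ n, 2 ≤ n → reesRelStable x n) :
    (∀ n, 2 ≤ n → (reesRelStable (fun i => Ideal.Quotient.mk J (x i)) n ↔
      (Ideal.span (Set.range x)) ^ n ⊓ J =
        Ideal.span (Set.range x) * ((Ideal.span (Set.range x)) ^ (n - 1) ⊓ J))) ∧
    strongAR (Ideal.span (Set.range x)) J =
      relType (fun i => Ideal.Quotient.mk J (x i)) ∧
    mediumAR (Ideal.span (Set.range x)) J =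
      siftedType (fun i => Ideal.Quotient.mk J (x i)) := by
  set I := Ideal.span (Set.range x) with hI
  have part1 : ∀ n, 2 ≤ n → (reesRelStable (fun i => Ideal.Quotient.mk J (x i)) n ↔
      I ^ n ⊓ J = I * (I ^ (n - 1) ⊓ J)) := by
    intro n hn
    obtain ⟨m, rfl⟩ : ∃ m, n = m + 1 := ⟨n - 1, by omega⟩
    have hl := hlin (m + 1) hn
    rw [reesRelStable, Nat.add_sub_cancel] at hl ⊢
    exact ⟨fun h => forward_dir x J m h, fun h => backward_dir x J m hl h⟩
  refine ⟨part1, ?_, ?_⟩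
  · apply congrArg sInf
    ext s
    simp only [Set.mem_setOf_eq]
    exact and_congr_right fun hs => forall_congr' fun n =>
      imp_congr_right fun hn => (part1 n (by omega)).symm
  · have hSeq : {n : ℕ | 2 ≤ n ∧ ¬ reesRelStable (fun i => Ideal.Quotient.mk J (x i)) n}
        = {n : ℕ | 2 ≤ n ∧ I ^ n ⊓ J ≠ I * (I ^ (n - 1) ⊓ J)} :=
      Set.ext fun n => and_congr_right fun hn => not_congr (part1 n hn)
    unfold mediumAR siftedType siftedDegrees
    rw [hSeq]
    obtain ⟨k, hk⟩ := Ideal.exists_pow_inf_eq_pow_smul I (J : Submodule A A)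
    have hk' : ∀ n, k ≤ n → I ^ n ⊓ J = I ^ (n - k) * (I ^ k ⊓ J) := by
      intro n hn
      have := hk n hn
      simpa [Ideal.smul_eq_mul, Ideal.mul_top] using this
    have hfin : {n : ℕ | 2 ≤ n ∧ I ^ n ⊓ J ≠ I * (I ^ (n - 1) ⊓ J)}.Finite := by
      refine (Set.finite_Iic (k + 1)).subset ?_
      intro n hn
      rcases hn with ⟨hn2, hnQ⟩
      by_contra hlt
      simp only [Set.mem_Iic, not_le] at hlt
      apply hnQ
      have h1 := hk' n (by omega)
      have h2 := hk' (n - 1) (by omega)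
      have h3 : n - k = (n - 1 - k) + 1 := by omega
      rw [h1, h3, pow_succ', mul_assoc, ← h2]
    rw [Set.ncard_union_eq (Set.disjoint_singleton_left.mpr (by simp))
      (Set.finite_singleton 1) hfin, Set.ncard_singleton]
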